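/- Let q be an odd prime power and G = 𝔽_q × 𝔽_q (additive group). Let D̃ = {(a,b) ∈ G : exactly one of a, b is a nonzero square and the other is a nonsquare}. Then D̃ is a partial difference set with parameters (q², (q-1)²/2, (q²-4q+7)/4, (q²-4q+3)/4): |D̃| = (q-1)²/2, and for each nonzero g ∈ G, the number of ordered pairs (x,y) ∈ D̃ × D̃ with x ≠ y and x - y = g equals (q²-4q+7)/4 if g ∈ D̃ and (q²-4q+3)/4 if g ∉ D̃ ∪ {0}. -/

import Mathlib

open Finset

section aux
variable {F : Type*} [Field F] [Fintype F] [DecidableEq F]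

private theorem pds_sum_chi_shift (c : F) :
    ∑ a : F, quadraticChar F (a + c) = ∑ a : F, quadraticChar F a :=
  Equiv.sum_comp (Equiv.addRight c) (fun b => quadraticChar F b)

private theorem pds_sum_chi_sq : ∑ a : F, (quadraticChar F a : ℤ)^2 = (Fintype.card F : ℤ) - 1 := by
  have h : ∀ a : F, (quadraticChar F a : ℤ)^2 = if a = 0 then 0 else 1 := by
    intro a; split
    · simp [*]
    · exact quadraticChar_sq_one ‹a ≠ 0›
  simp only [h]
  rw [Finset.sum_ite, Finset.filter_ne']
  simp only [Finset.sum_const, smul_zero, zero_add, nsmul_eq_mul, mul_one,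
    Finset.card_erase_of_mem (Finset.mem_univ (0:F)), Finset.card_univ]
  rw [Nat.cast_sub Fintype.card_pos]
  simp

private theorem pds_key (hF : ringChar F ≠ 2) {c : F} (hc : c ≠ 0) :
    ∑ a : F, quadraticChar F a * quadraticChar F (a + c) = -1 := by
  classical
  have h1 : ∀ a : F, quadraticChar F a * quadraticChar F (a + c)
      = if a = 0 then 0 else quadraticChar F (1 + c * a⁻¹) := by
    intro a
    split
    · simp [*]
    · rename_i ha
      have : a + c = a * (1 + c * a⁻¹) := by field_simp
      rw [this, map_mul, ← mul_assoc, ← pow_two, quadraticChar_sq_one ha, one_mul]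
  simp only [h1]
  rw [Finset.sum_ite, Finset.filter_ne']
  rw [Finset.sum_bij' (s := Finset.univ.erase 0) (t := Finset.univ.erase 1)
    (g := fun b => quadraticChar F b)
    (fun a _ => 1 + c * a⁻¹) (fun b _ => c * (b - 1)⁻¹) ?_ ?_ ?_ ?_ ?_]
  · rw [Finset.sum_erase_eq_sub (Finset.mem_univ 1), quadraticChar_sum_zero hF]
    simp
  · intro a ha
    simp only [Finset.mem_erase, Finset.mem_univ, and_true] at ha ⊢
    intro h
    apply hc
    have : c * a⁻¹ = 0 := by linear_combination h
    rcases mul_eq_zero.mp this with h | h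
    · exact h
    · exact absurd (inv_eq_zero.mp h) ha
  · intro b hb
    simp only [Finset.mem_erase, Finset.mem_univ, and_true] at hb ⊢
    intro h
    apply hb
    rcases mul_eq_zero.mp h with h | h
    · exact absurd h hc
    · exact sub_eq_zero.mp (inv_eq_zero.mp h)
  · intro a ha
    simp only [Finset.mem_erase, Finset.mem_univ, and_true] at ha
    field_simp
    simp [hc]
  · intro b hb
    simp only [Finset.mem_erase, Finset.mem_univ, and_true] at hb
    have : b - 1 ≠ 0 := sub_ne_zero.mpr hb
    field_simp
    ring
  · intro a ha; rfl

private theorem pds_sumB (hF : ringChar F ≠ 2) (c : F) :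
    ∑ a : F, (quadraticChar F a : ℤ)^2 * quadraticChar F (a + c) = -(quadraticChar F c) := by
  have h : ∀ a : F, (quadraticChar F a : ℤ)^2 * quadraticChar F (a + c)
      = if a = 0 then 0 else quadraticChar F (a + c) := by
    intro a; split
    · simp [*]
    · rw [quadraticChar_sq_one ‹a ≠ 0›, one_mul]
  simp only [h]
  rw [Finset.sum_ite, Finset.filter_ne']
  rw [Finset.sum_erase_eq_sub (Finset.mem_univ 0), pds_sum_chi_shift c,
    quadraticChar_sum_zero hF]
  simp

private theorem pds_sumB' (hF : ringChar F ≠ 2) (c : F) :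
    ∑ a : F, (quadraticChar F a : ℤ) * (quadraticChar F (a + c))^2
      = -(quadraticChar F (-c)) := by
  have h : ∀ a : F, (quadraticChar F a : ℤ) * (quadraticChar F (a + c))^2
      = if a = -c then 0 else quadraticChar F a := by
    intro a; split
    · rename_i h; simp [h]
    · rename_i h
      have : a + c ≠ 0 := fun hh => h (by linear_combination hh)
      rw [quadraticChar_sq_one this, mul_one]
  simp only [h]
  rw [Finset.sum_ite, Finset.filter_ne']
  rw [Finset.sum_erase_eq_sub (Finset.mem_univ (-c)), quadraticChar_sum_zero hF]
  simp

private theorem pds_sumA {c : F} (hc : c ≠ 0) :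
    ∑ a : F, (quadraticChar F a : ℤ)^2 * (quadraticChar F (a + c))^2
      = (Fintype.card F : ℤ) - 2 := by
  have h : ∀ a : F, (quadraticChar F a : ℤ)^2 * (quadraticChar F (a + c))^2
      = if a = 0 ∨ a = -c then 0 else 1 := by
    intro a; split
    · rename_i h
      rcases h with h | h <;> simp [h]
    · rename_i h
      push_neg at h
      have h2 : a + c ≠ 0 := fun hh => h.2 (by linear_combination hh)
      rw [quadraticChar_sq_one h.1, quadraticChar_sq_one h2, one_mul]
  simp only [h]
  rw [Finset.sum_ite, Finset.sum_const, Finset.sum_const, smul_zero, zero_add]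
  have hset : Finset.univ.filter (fun a : F => ¬(a = 0 ∨ a = -c)) = Finset.univ \ {0, -c} := by
    ext a; simp [not_or]
  have hcard2 : ({0, -c} : Finset F).card = 2 := by
    have h0 : (0:F) ∉ ({-c} : Finset F) := by
      simp only [Finset.mem_singleton]
      intro h; exact hc (neg_eq_zero.mp h.symm)
    rw [Finset.card_insert_of_notMem h0, Finset.card_singleton]
  have hle : (2 : ℕ) ≤ Fintype.card F := by
    have := Finset.card_le_card (Finset.subset_univ ({0, -c} : Finset F))
    rwa [hcard2, Finset.card_univ] at this
  rw [hset, Finset.card_sdiff_of_subset (Finset.subset_univ _), hcard2, Finset.card_univ]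
  simp only [nsmul_eq_mul, mul_one]
  rw [Nat.cast_sub hle]
  norm_num

end aux

section main
variable {F : Type*} [Field F] [Fintype F] [DecidableEq F]

private theorem pds_sumA0 :
    ∑ a : F, (quadraticChar F a : ℤ)^2 * (quadraticChar F a)^2
      = (Fintype.card F : ℤ) - 1 := by
  have h : ∀ a : F, (quadraticChar F a : ℤ)^2 * (quadraticChar F a)^2
      = (quadraticChar F a : ℤ)^2 := by
    intro a
    by_cases ha : a = 0
    · simp [ha]
    · rw [quadraticChar_sq_one ha]; ring
  simp only [h]
  exact pds_sum_chi_sq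

private theorem pds_sumC0 :
    ∑ a : F, (quadraticChar F a : ℤ) * (quadraticChar F a)
      = (Fintype.card F : ℤ) - 1 := by
  simp only [← pow_two]
  exact pds_sum_chi_sq

private theorem pds_split (f g : F → ℤ) :
    ∑ p : F × F, f p.1 * g p.2 = (∑ a, f a) * (∑ b, g b) := by
  rw [Fintype.sum_prod_type, Finset.sum_mul_sum]

private theorem pds_split4 (f1 g1 f2 g2 f3 g3 f4 g4 : F → ℤ) :
    ∑ p : F × F, (f1 p.1 * g1 p.2 - f2 p.1 * g2 p.2 - f3 p.1 * g3 p.2 + f4 p.1 * g4 p.2)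
      = (∑ a, f1 a) * (∑ b, g1 b) - (∑ a, f2 a) * (∑ b, g2 b)
        - (∑ a, f3 a) * (∑ b, g3 b) + (∑ a, f4 a) * (∑ b, g4 b) := by
  simp only [Finset.sum_add_distrib, Finset.sum_sub_distrib, pds_split]

variable [DecidablePred (IsSquare : F → Prop)]

private theorem pds_memD (D : Finset (F × F))
    (hD : D = Finset.univ.filter fun p : F × F =>
      (p.1 ≠ 0 ∧ IsSquare p.1 ∧ ¬IsSquare p.2) ∨
      (¬IsSquare p.1 ∧ p.2 ≠ 0 ∧ IsSquare p.2)) (p : F × F) :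
    p ∈ D ↔ (quadraticChar F p.1 : ℤ) * quadraticChar F p.2 = -1 := by
  subst hD
  simp only [Finset.mem_filter, Finset.mem_univ, true_and]
  constructor
  · rintro (⟨h1, h2, h3⟩ | ⟨h1, h2, h3⟩)
    · rw [(quadraticChar_one_iff_isSquare h1).mpr h2,
        quadraticChar_neg_one_iff_not_isSquare.mpr h3]
      ring
    · have h1' : p.1 ≠ 0 := fun hh => h1 (by simp [hh])
      rw [quadraticChar_neg_one_iff_not_isSquare.mpr h1,
        (quadraticChar_one_iff_isSquare h2).mpr h3]
      ring
  · intro h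
    have h1 : p.1 ≠ 0 := by
      intro hh; rw [hh] at h; simp at h
    have h2 : p.2 ≠ 0 := by
      intro hh; rw [hh] at h; simp at h
    rcases quadraticChar_dichotomy h1 with e1 | e1 <;>
      rcases quadraticChar_dichotomy h2 with e2 | e2
    · rw [e1, e2] at h; norm_num at h
    · exact Or.inl ⟨h1, (quadraticChar_one_iff_isSquare h1).mp e1,
        quadraticChar_neg_one_iff_not_isSquare.mp e2⟩
    · exact Or.inr ⟨quadraticChar_neg_one_iff_not_isSquare.mp e1, h2,
        (quadraticChar_one_iff_isSquare h2).mp e2⟩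
    · rw [e1, e2] at h; norm_num at h

private theorem pds_ind (D : Finset (F × F))
    (hD : D = Finset.univ.filter fun p : F × F =>
      (p.1 ≠ 0 ∧ IsSquare p.1 ∧ ¬IsSquare p.2) ∨
      (¬IsSquare p.1 ∧ p.2 ≠ 0 ∧ IsSquare p.2)) (p : F × F) :
    (if p ∈ D then (2:ℤ) else 0)
      = ((quadraticChar F p.1 : ℤ) * quadraticChar F p.2)^2
        - (quadraticChar F p.1 : ℤ) * quadraticChar F p.2 := by
  simp only [pds_memD D hD]
  have h1 : (quadraticChar F p.1 : ℤ) = 0 ∨ (quadraticChar F p.1 : ℤ) = 1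
      ∨ (quadraticChar F p.1 : ℤ) = -1 := by
    by_cases h : p.1 = 0
    · exact Or.inl (by simp [h])
    · rcases quadraticChar_dichotomy h with h | h
      · exact Or.inr (Or.inl h)
      · exact Or.inr (Or.inr h)
  have h2 : (quadraticChar F p.2 : ℤ) = 0 ∨ (quadraticChar F p.2 : ℤ) = 1
      ∨ (quadraticChar F p.2 : ℤ) = -1 := by
    by_cases h : p.2 = 0
    · exact Or.inl (by simp [h])
    · rcases quadraticChar_dichotomy h with h | h
      · exact Or.inr (Or.inl h)
      · exact Or.inr (Or.inr h)
  rcases h1 with h1 | h1 | h1 <;> rcases h2 with h2 | h2 | h2 <;>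
    rw [h1, h2] <;> norm_num

end main

section main2
variable {F : Type*} [Field F] [Fintype F] [DecidableEq F]
  [DecidablePred (IsSquare : F → Prop)]

set_option maxHeartbeats 1000000 in
private theorem pds_count (D : Finset (F × F))
    (hD : D = Finset.univ.filter fun p : F × F =>
      (p.1 ≠ 0 ∧ IsSquare p.1 ∧ ¬IsSquare p.2) ∨
      (¬IsSquare p.1 ∧ p.2 ≠ 0 ∧ IsSquare p.2)) (g : F × F) (hg : g ≠ 0) :
    4 * (((D ×ˢ D).filter fun p => p.1 ≠ p.2 ∧ p.1 - p.2 = g).card : ℤ)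
      = (∑ a : F, (quadraticChar F a : ℤ)^2 * (quadraticChar F (a + g.1))^2)
          * (∑ b : F, (quadraticChar F b : ℤ)^2 * (quadraticChar F (b + g.2))^2)
        - (∑ a : F, (quadraticChar F a : ℤ)^2 * quadraticChar F (a + g.1))
          * (∑ b : F, (quadraticChar F b : ℤ)^2 * quadraticChar F (b + g.2))
        - (∑ a : F, (quadraticChar F a : ℤ) * (quadraticChar F (a + g.1))^2)
          * (∑ b : F, (quadraticChar F b : ℤ) * (quadraticChar F (b + g.2))^2)
        + (∑ a : F, (quadraticChar F a : ℤ) * quadraticChar F (a + g.1))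
          * (∑ b : F, (quadraticChar F b : ℤ) * quadraticChar F (b + g.2)) := by
  classical
  have hcard : ((D ×ˢ D).filter fun p => p.1 ≠ p.2 ∧ p.1 - p.2 = g).card
      = (Finset.univ.filter fun y : F × F => y ∈ D ∧ y + g ∈ D).card := by
    refine Finset.card_bij' (fun p _ => p.2) (fun y _ => (y + g, y)) ?_ ?_ ?_ ?_
    · intro p hp
      simp only [Finset.mem_filter, Finset.mem_product] at hp
      simp only [Finset.mem_filter, Finset.mem_univ, true_and]
      refine ⟨hp.1.2, ?_⟩
      have : p.1 = p.2 + g := by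
        have := hp.2.2; linear_combination this
      rw [← this]; exact hp.1.1
    · intro y hy
      simp only [Finset.mem_filter, Finset.mem_univ, true_and] at hy
      simp only [Finset.mem_filter, Finset.mem_product]
      refine ⟨⟨hy.2, hy.1⟩, ?_, by abel⟩
      intro h
      exact hg (by linear_combination h)
    · intro p hp
      simp only [Finset.mem_filter, Finset.mem_product] at hp
      have : p.1 = p.2 + g := by linear_combination hp.2.2
      exact Prod.ext this.symm rfl
    · intro y hy; rfl
  rw [hcard]
  have h4 : 4 * (((Finset.univ.filter fun y : F × F => y ∈ D ∧ y + g ∈ D).card : ℤ))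
      = ∑ p : F × F, (if p ∈ D ∧ p + g ∈ D then (4:ℤ) else 0) := by
    rw [Finset.sum_ite, Finset.sum_const, Finset.sum_const, smul_zero, add_zero, nsmul_eq_mul]
    ring
  rw [h4]
  have hpt : ∀ p : F × F, (if p ∈ D ∧ p + g ∈ D then (4:ℤ) else 0)
      = (if p ∈ D then (2:ℤ) else 0) * (if p + g ∈ D then (2:ℤ) else 0) := by
    intro p
    by_cases h1 : p ∈ D <;> by_cases h2 : p + g ∈ D <;> simp [h1, h2]
  simp only [hpt]
  have hpt2 : ∀ p : F × F, (if p ∈ D then (2:ℤ) else 0) * (if p + g ∈ D then (2:ℤ) else 0)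
      = (fun a => (quadraticChar F a : ℤ)^2 * (quadraticChar F (a + g.1))^2) p.1
          * (fun b => (quadraticChar F b : ℤ)^2 * (quadraticChar F (b + g.2))^2) p.2
        - (fun a => (quadraticChar F a : ℤ)^2 * quadraticChar F (a + g.1)) p.1
          * (fun b => (quadraticChar F b : ℤ)^2 * quadraticChar F (b + g.2)) p.2
        - (fun a => (quadraticChar F a : ℤ) * (quadraticChar F (a + g.1))^2) p.1
          * (fun b => (quadraticChar F b : ℤ) * (quadraticChar F (b + g.2))^2) p.2
        + (fun a => (quadraticChar F a : ℤ) * quadraticChar F (a + g.1)) p.1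
          * (fun b => (quadraticChar F b : ℤ) * quadraticChar F (b + g.2)) p.2 := by
    intro p
    rw [pds_ind D hD p, pds_ind D hD (p + g)]
    simp only [Prod.fst_add, Prod.snd_add]
    ring
  simp only [hpt2]
  exact pds_split4
    (fun a => (quadraticChar F a : ℤ)^2 * (quadraticChar F (a + g.1))^2)
    (fun b => (quadraticChar F b : ℤ)^2 * (quadraticChar F (b + g.2))^2)
    (fun a => (quadraticChar F a : ℤ)^2 * quadraticChar F (a + g.1))
    (fun b => (quadraticChar F b : ℤ)^2 * quadraticChar F (b + g.2))
    (fun a => (quadraticChar F a : ℤ) * (quadraticChar F (a + g.1))^2)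
    (fun b => (quadraticChar F b : ℤ) * (quadraticChar F (b + g.2))^2)
    (fun a => (quadraticChar F a : ℤ) * quadraticChar F (a + g.1))
    (fun b => (quadraticChar F b : ℤ) * quadraticChar F (b + g.2))

end main2

section final
variable {F : Type*} [Field F] [Fintype F] [DecidableEq F]

private theorem pds_split2 (f1 g1 f2 g2 : F → ℤ) :
    ∑ p : F × F, (f1 p.1 * g1 p.2 - f2 p.1 * g2 p.2)
      = (∑ a, f1 a) * (∑ b, g1 b) - (∑ a, f2 a) * (∑ b, g2 b) := by
  simp only [Finset.sum_sub_distrib, pds_split]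

theorem stmt_19' {F : Type*} [Field F] [Fintype F] [DecidableEq F]
    [DecidablePred (IsSquare : F → Prop)]
    (q : ℕ) (hq : Fintype.card F = q) (hodd : Odd q)
    (D : Finset (F × F))
    (hD : D = Finset.univ.filter fun p : F × F =>
      (p.1 ≠ 0 ∧ IsSquare p.1 ∧ ¬IsSquare p.2) ∨
      (¬IsSquare p.1 ∧ p.2 ≠ 0 ∧ IsSquare p.2)) :
    2 * D.card = (q - 1) ^ 2 ∧
    ∀ g : F × F, g ≠ 0 →
      (g ∈ D →
        4 * (((D ×ˢ D).filter fun p => p.1 ≠ p.2 ∧ p.1 - p.2 = g).card : ℤ) =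
          (q : ℤ) ^ 2 - 4 * q + 7) ∧
      (g ∉ D →
        4 * (((D ×ˢ D).filter fun p => p.1 ≠ p.2 ∧ p.1 - p.2 = g).card : ℤ) =
          (q : ℤ) ^ 2 - 4 * q + 3) := by
  classical
  have hF2 : ringChar F ≠ 2 := by
    intro h
    have h2 := FiniteField.even_card_of_char_two h
    rw [hq] at h2
    rw [Nat.odd_iff] at hodd
    omega
  have hneg : ∀ x : F, (quadraticChar F (-x) : ℤ)
      = quadraticChar F (-1) * quadraticChar F x := by
    intro x; rw [neg_eq_neg_one_mul x, map_mul]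
  have hm1 : (quadraticChar F (-1 : F) : ℤ)^2 = 1 :=
    quadraticChar_sq_one (neg_ne_zero.mpr one_ne_zero)
  constructor
  · -- size of D
    have hd1 : (2:ℤ) * (D.card : ℤ) = ((q:ℤ) - 1)^2 := by
      have h2 : (2:ℤ) * (D.card : ℤ) = ∑ p : F × F, (if p ∈ D then (2:ℤ) else 0) := by
        rw [Finset.sum_ite, Finset.sum_const, Finset.sum_const, smul_zero, add_zero,
          nsmul_eq_mul, Finset.filter_mem_eq_inter, Finset.univ_inter]
        ring
      rw [h2]
      have hpt : ∀ p : F × F, (if p ∈ D then (2:ℤ) else 0)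
          = (fun a => (quadraticChar F a : ℤ)^2) p.1
              * (fun b => (quadraticChar F b : ℤ)^2) p.2
            - (fun a => (quadraticChar F a : ℤ)) p.1
              * (fun b => (quadraticChar F b : ℤ)) p.2 := by
        intro p; rw [pds_ind D hD p]; ring
      simp only [hpt]
      rw [pds_split2 (fun a => (quadraticChar F a : ℤ)^2)
        (fun b => (quadraticChar F b : ℤ)^2)
        (fun a => (quadraticChar F a : ℤ)) (fun b => (quadraticChar F b : ℤ))]
      rw [pds_sum_chi_sq, quadraticChar_sum_zero hF2, hq]
      ring
    have hq1 : 1 ≤ q := hodd.pos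
    have : ((2 * D.card : ℕ) : ℤ) = (((q - 1) ^ 2 : ℕ) : ℤ) := by
      push_cast [Nat.cast_sub hq1]
      linarith [hd1]
    exact_mod_cast this
  · intro g hg
    have hcnt := pds_count D hD g hg
    by_cases hc : g.1 = 0
    · have hd : g.2 ≠ 0 := fun h => hg (Prod.ext hc h)
      have e1 : ∑ a : F, (quadraticChar F a : ℤ)^2 * (quadraticChar F (a + g.1))^2
          = (Fintype.card F : ℤ) - 1 := by
        rw [hc]; simp only [add_zero]; exact pds_sumA0
      have e2 : ∑ a : F, (quadraticChar F a : ℤ)^2 * quadraticChar F (a + g.1) = 0 := by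
        rw [hc]; simpa using pds_sumB hF2 (0 : F)
      have e3 : ∑ a : F, (quadraticChar F a : ℤ) * (quadraticChar F (a + g.1))^2 = 0 := by
        rw [hc]; simpa using pds_sumB' hF2 (0 : F)
      have e4 : ∑ a : F, (quadraticChar F a : ℤ) * quadraticChar F (a + g.1)
          = (Fintype.card F : ℤ) - 1 := by
        rw [hc]; simp only [add_zero]; exact pds_sumC0
      rw [e1, e2, e3, e4, pds_sumA hd, pds_key hF2 hd, hq] at hcnt
      constructor
      · intro hgD
        exfalso
        have := (pds_memD D hD g).mp hgD
        rw [hc] at this; simp at this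
      · intro _
        rw [hcnt]; ring
    · by_cases hd : g.2 = 0
      · have e1 : ∑ b : F, (quadraticChar F b : ℤ)^2 * (quadraticChar F (b + g.2))^2
            = (Fintype.card F : ℤ) - 1 := by
          rw [hd]; simp only [add_zero]; exact pds_sumA0
        have e2 : ∑ b : F, (quadraticChar F b : ℤ)^2 * quadraticChar F (b + g.2) = 0 := by
          rw [hd]; simpa using pds_sumB hF2 (0 : F)
        have e3 : ∑ b : F, (quadraticChar F b : ℤ) * (quadraticChar F (b + g.2))^2 = 0 := by
          rw [hd]; simpa using pds_sumB' hF2 (0 : F)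
        have e4 : ∑ b : F, (quadraticChar F b : ℤ) * quadraticChar F (b + g.2)
            = (Fintype.card F : ℤ) - 1 := by
          rw [hd]; simp only [add_zero]; exact pds_sumC0
        rw [e1, e2, e3, e4, pds_sumA hc, pds_key hF2 hc, hq] at hcnt
        constructor
        · intro hgD
          exfalso
          have := (pds_memD D hD g).mp hgD
          rw [hd] at this; simp at this
        · intro _
          rw [hcnt]; ring
      · rw [pds_sumA hc, pds_sumA hd, pds_sumB hF2 g.1, pds_sumB hF2 g.2,
          pds_sumB' hF2 g.1, pds_sumB' hF2 g.2, pds_key hF2 hc, pds_key hF2 hd,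
          hneg g.1, hneg g.2, hq] at hcnt
        constructor
        · intro hgD
          have e := (pds_memD D hD g).mp hgD
          linear_combination hcnt - (1 + (quadraticChar F (-1 : F) : ℤ)^2) * e + hm1
        · intro hgnD
          have e : (quadraticChar F g.1 : ℤ) * quadraticChar F g.2 = 1 := by
            rcases quadraticChar_dichotomy hc with ex | ex <;>
              rcases quadraticChar_dichotomy hd with ey | ey
            · rw [ex, ey]; norm_num
            · exact absurd ((pds_memD D hD g).mpr (by rw [ex, ey]; ring)) hgnD
            · exact absurd ((pds_memD D hD g).mpr (by rw [ex, ey]; ring)) hgnD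
            · rw [ex, ey]; norm_num
          linear_combination hcnt - (1 + (quadraticChar F (-1 : F) : ℤ)^2) * e - hm1

end final

/-- Let `q` be an odd prime power, `G = 𝔽_q × 𝔽_q`, and
`D̃ = {(a,b) : exactly one of a, b is a nonzero square and the other a nonsquare}`.
Then `D̃` is a partial difference set with parameters
`(q², (q-1)²/2, (q²-4q+7)/4, (q²-4q+3)/4)`. -/
theorem stmt_19 {F : Type*} [Field F] [Fintype F] [DecidableEq F]
    [DecidablePred (IsSquare : F → Prop)]
    (q : ℕ) (hq : Fintype.card F = q) (hodd : Odd q)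
    (D : Finset (F × F))
    (hD : D = Finset.univ.filter fun p : F × F =>
      (p.1 ≠ 0 ∧ IsSquare p.1 ∧ ¬IsSquare p.2) ∨
      (¬IsSquare p.1 ∧ p.2 ≠ 0 ∧ IsSquare p.2)) :
    2 * D.card = (q - 1) ^ 2 ∧
    ∀ g : F × F, g ≠ 0 →
      (g ∈ D →
        4 * (((D ×ˢ D).filter fun p => p.1 ≠ p.2 ∧ p.1 - p.2 = g).card : ℤ) =
          (q : ℤ) ^ 2 - 4 * q + 7) ∧
      (g ∉ D →
        4 * (((D ×ˢ D).filter fun p => p.1 ≠ p.2 ∧ p.1 - p.2 = g).card : ℤ) =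
          (q : ℤ) ^ 2 - 4 * q + 3) := by
  exact stmt_19' q hq hodd D hD
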